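/- Every γ_t-critical graph G of order n with γ_t(G) = n − Δ(G) and minimum degree δ(G) ≥ 2 is connected. -/
import Mathlib


open scoped Classical

namespace SimpleGraph

variable {V : Type*}

/-- A set `S` is a total dominating set if every vertex is adjacent to a vertex of `S`. -/
def IsTotalDomSet (G : SimpleGraph V) (S : Set V) : Prop :=
  ∀ v : V, ∃ u ∈ S, G.Adj v u

/-- The total domination number: minimum cardinality of a total dominating set. -/
noncomputable def totalDomNum (G : SimpleGraph V) [Fintype V] : ℕ :=
  sInf {n : ℕ | ∃ S : Finset V, G.IsTotalDomSet ↑S ∧ S.card = n}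

/-- The graph obtained by deleting the vertex `v`. -/
def deleteVert (G : SimpleGraph V) (v : V) : SimpleGraph {u : V // u ≠ v} :=
  G.induce {u : V | u ≠ v}

/-- A support vertex is a vertex adjacent to a leaf (a vertex of degree one). -/
noncomputable def IsSupportVertex (G : SimpleGraph V) [Fintype V] (v : V) : Prop :=
  ∃ u : V, G.Adj v u ∧ G.degree u = 1

/-- `G` is total domination vertex critical: it has no isolated vertex and deleting any
vertex that is not a support vertex decreases the total domination number. -/
noncomputable def IsTotalDomCritical (G : SimpleGraph V) [Fintype V] : Prop :=
  (∀ v : V, 0 < G.degree v) ∧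
  ∀ v : V, ¬ G.IsSupportVertex v →
    (G.deleteVert v).totalDomNum < G.totalDomNum

lemma totalDomNum_le_card {V : Type*} [Fintype V] (G : SimpleGraph V) {S : Finset V}
    (hS : G.IsTotalDomSet ↑S) : G.totalDomNum ≤ S.card :=
  Nat.sInf_le ⟨S, hS, rfl⟩

/-- every `γₜ`-critical graph `G` with `γₜ(G) = n - Δ(G)` and
`δ(G) ≥ 2` is connected. -/
theorem stmt7 {V : Type*} [Fintype V] (G : SimpleGraph V)
    (hcrit : G.IsTotalDomCritical)
    (hγ : G.totalDomNum = Fintype.card V - G.maxDegree)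
    (hδ : 2 ≤ G.minDegree) :
    G.Connected := by
  classical
  by_contra hcon
  have hV : Nonempty V := by
    by_contra hV
    rw [not_nonempty_iff] at hV
    simp [minDegree, Finset.univ_eq_empty] at hδ
  have hdeg2 : ∀ x : V, 2 ≤ G.degree x := fun x => hδ.trans (G.minDegree_le_degree x)
  have hnbr : ∀ (x z : V), ∃ y, G.Adj x y ∧ y ≠ z := by
    intro x z
    have h2 : 2 ≤ (G.neighborFinset x).card := by
      rw [card_neighborFinset_eq_degree]; exact hdeg2 x
    have hne : (G.neighborFinset x \ {z}).Nonempty := by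
      rw [Finset.sdiff_nonempty]
      intro hsub
      have := Finset.card_le_card hsub
      simp only [Finset.card_singleton] at this
      omega
    obtain ⟨y, hy⟩ := hne
    rw [Finset.mem_sdiff, mem_neighborFinset, Finset.mem_singleton] at hy
    exact ⟨y, hy.1, hy.2⟩
  obtain ⟨v, hv⟩ := G.exists_maximal_degree_vertex
  have hns : ∀ x : V, ¬ G.IsSupportVertex x := by
    rintro x ⟨u, _, hdeg⟩
    have := hdeg2 u; omega
  have hlt := hcrit.2 v (hns v)
  -- the whole vertex set of G - v is a total dominating set of G - v
  have huniv : (G.deleteVert v).IsTotalDomSet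
      ((Finset.univ : Finset {u : V // u ≠ v}) : Set {u : V // u ≠ v}) := by
    intro x
    obtain ⟨y, hxy, hyv⟩ := hnbr (↑x) v
    exact ⟨⟨y, hyv⟩, by simp, hxy⟩
  have hSne : {n : ℕ | ∃ S : Finset {u : V // u ≠ v},
      (G.deleteVert v).IsTotalDomSet ↑S ∧ S.card = n}.Nonempty :=
    ⟨_, Finset.univ, huniv, rfl⟩
  have hmem : (G.deleteVert v).totalDomNum ∈ {n : ℕ | ∃ S : Finset {u : V // u ≠ v},
      (G.deleteVert v).IsTotalDomSet ↑S ∧ S.card = n} := by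
    rw [totalDomNum]; exact Nat.sInf_mem hSne
  obtain ⟨S, hS, hScard⟩ := hmem
  set S' : Finset V := S.image Subtype.val with hS'def
  have hS'card : S'.card = S.card := Finset.card_image_of_injective S Subtype.val_injective
  have hdom : ∀ x : V, x ≠ v → ∃ y ∈ S', G.Adj x y := by
    intro x hx
    obtain ⟨u, huS, hadj⟩ := hS ⟨x, hx⟩
    exact ⟨↑u, Finset.mem_image_of_mem _ huS, hadj⟩
  obtain ⟨u0, hu0, _⟩ := hnbr v v
  -- γ_t(G) = γ_t(G-v) + 1
  have hT0 : G.IsTotalDomSet ↑(insert u0 S') := by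
    intro x
    by_cases hx : x = v
    · exact ⟨u0, by simp, hx ▸ hu0⟩
    · obtain ⟨y, hyS, hadj⟩ := hdom x hx
      exact ⟨y, by simp [Finset.mem_insert, hyS], hadj⟩
  have hγle : G.totalDomNum ≤ S.card + 1 := by
    have := G.totalDomNum_le_card hT0
    have hc := Finset.card_insert_le u0 S'
    omega
  have heq : G.totalDomNum = (G.deleteVert v).totalDomNum + 1 := by omega
  -- no vertex of S' is adjacent to v
  have hSv : ∀ y ∈ S', ¬ G.Adj v y := by
    intro y hyS hadj
    have hTDS : G.IsTotalDomSet ↑S' := by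
      intro x
      by_cases hx : x = v
      · exact ⟨y, hyS, hx ▸ hadj⟩
      · exact hdom x hx
    have := G.totalDomNum_le_card hTDS
    omega
  have hvS' : v ∉ S' := by
    rw [hS'def, Finset.mem_image]
    rintro ⟨⟨a, ha⟩, -, h⟩
    exact ha h
  -- S' is exactly the complement of the closed neighborhood of v
  set C : Finset V := Finset.univ \ insert v (G.neighborFinset v) with hCdef
  have hsub : S' ⊆ C := by
    intro y hy
    rw [hCdef, Finset.mem_sdiff]
    refine ⟨Finset.mem_univ _, ?_⟩
    rw [Finset.mem_insert, mem_neighborFinset]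
    rintro (rfl | hadj)
    · exact hvS' hy
    · exact hSv y hy hadj
  have hvN : v ∉ G.neighborFinset v := by simp
  have hNcard : (insert v (G.neighborFinset v)).card = G.degree v + 1 := by
    rw [Finset.card_insert_of_notMem hvN, card_neighborFinset_eq_degree]
  have hNle : G.degree v + 1 ≤ Fintype.card V := by
    have := Finset.card_le_univ (insert v (G.neighborFinset v))
    omega
  have hCcard : C.card = Fintype.card V - (G.degree v + 1) := by
    rw [hCdef, Finset.card_sdiff_of_subset (Finset.subset_univ _), hNcard, Finset.card_univ]
  have hS'C : S' = C := by
    apply Finset.eq_of_subset_of_card_le hsub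
    rw [hCcard, hS'card]
    omega
  have hkey : ∀ x : V, x ≠ v → ∃ y, G.Adj x y ∧ y ≠ v ∧ ¬ G.Adj v y := by
    intro x hx
    obtain ⟨y, hyS, hadj⟩ := hdom x hx
    rw [hS'C, hCdef, Finset.mem_sdiff, Finset.mem_insert, mem_neighborFinset] at hyS
    push_neg at hyS
    exact ⟨y, hadj, hyS.2.1, hyS.2.2⟩
  -- get a vertex w not reachable from v
  have hnpre : ¬ G.Preconnected := fun hp => hcon (G.connected_iff.mpr ⟨hp, hV⟩)
  rw [Preconnected] at hnpre
  push_neg at hnpre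
  obtain ⟨a, b, hab⟩ := hnpre
  have hwex : ∃ w, ¬ G.Reachable v w := by
    by_contra h
    push_neg at h
    exact hab ((h a).symm.trans (h b))
  obtain ⟨w, hw⟩ := hwex
  have hwv : w ≠ v := by rintro rfl; exact hw (Reachable.refl _)
  have hwN : ¬ G.Adj v w := fun h => hw h.reachable
  -- the contradicting small total dominating set
  set D : Finset V := Finset.univ \ insert w (insert v (G.neighborFinset v)) with hDdef
  have hwmem : w ∉ insert v (G.neighborFinset v) := by
    rw [Finset.mem_insert, mem_neighborFinset]
    rintro (rfl | hadj)
    · exact hwv rfl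
    · exact hwN hadj
  have hu0D : u0 ∉ D := by
    rw [hDdef, Finset.mem_sdiff]
    rintro ⟨-, hmem⟩
    exact hmem (by rw [Finset.mem_insert, Finset.mem_insert, mem_neighborFinset]; tauto)
  have hDcard : D.card = Fintype.card V - (G.degree v + 2) := by
    rw [hDdef, Finset.card_sdiff_of_subset (Finset.subset_univ _), Finset.card_insert_of_notMem hwmem,
      hNcard, Finset.card_univ]
  have hD2le : G.degree v + 2 ≤ Fintype.card V := by
    have := Finset.card_le_univ (insert w (insert v (G.neighborFinset v)))
    rw [Finset.card_insert_of_notMem hwmem, hNcard] at this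
    omega
  have hmemD : ∀ y : V, y ≠ w → y ≠ v → ¬ G.Adj v y → y ∈ D := by
    intro y h1 h2 h3
    rw [hDdef, Finset.mem_sdiff, Finset.mem_insert, Finset.mem_insert, mem_neighborFinset]
    push_neg
    exact ⟨Finset.mem_univ _, h1, h2, h3⟩
  have hTDS : G.IsTotalDomSet ↑(insert u0 D) := by
    intro x
    by_cases hx : x = v
    · exact ⟨u0, by simp, hx ▸ hu0⟩
    by_cases hr : G.Reachable v x
    · obtain ⟨y, hadj, hyv, hyN⟩ := hkey x hx
      have hyw : y ≠ w := fun h => hw (h ▸ hr.trans hadj.reachable)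
      exact ⟨y, by simp [Finset.mem_insert, hmemD y hyw hyv hyN], hadj⟩
    · obtain ⟨y, hadj, hyw⟩ := hnbr x w
      have hry : ¬ G.Reachable v y := fun h => hr (h.trans hadj.symm.reachable)
      have hyv : y ≠ v := by rintro rfl; exact hry (Reachable.refl _)
      have hyN : ¬ G.Adj v y := fun h => hry h.reachable
      exact ⟨y, by simp [Finset.mem_insert, hmemD y hyw hyv hyN], hadj⟩
  have hfin := G.totalDomNum_le_card hTDS
  have hcard : (insert u0 D).card = Fintype.card V - (G.degree v + 2) + 1 := by
    rw [Finset.card_insert_of_notMem hu0D, hDcard]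
  omega


end SimpleGraph
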